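/- Let V be a finite set, h a binary preference function on V, and σ_opt a ranking of V minimizing the pairwise disagreement L(h,σ) = C(n,2)⁻¹ Σ_{u≠v} h(u,v)σ(v,u) over all rankings σ. Then E_s[L(h, QuickSort_s(V,h))] ≤ 3·L(h, σ_opt). -/

import Mathlib

variable {V : Type*} [DecidableEq V]

/-- QuickSort on a list using a (possibly non-transitive) preference function:
the head is the pivot, elements preferred to the pivot go left.  Running it on
a uniformly random permutation of the input is equivalent to uniformly random
pivot selection. -/
def qsort (h : V → V → Bool) : List V → List V
  | [] => []
  | x :: xs =>
      qsort h (xs.filter (fun y => h y x)) ++ x :: qsort h (xs.filter (fun y => !(h y x)))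
  termination_by l => l.length
  decreasing_by
    · simp only [List.length_cons, List.length_unattach]; exact Nat.lt_succ_of_le ((List.length_filter_le _ _).trans_eq List.length_attach)
    · simp only [List.length_cons, List.length_unattach]; exact Nat.lt_succ_of_le ((List.length_filter_le _ _).trans_eq List.length_attach)

/-- The unordered pairs compared directly (pivot vs. element of its call). -/
def directPairs (h : V → V → Bool) : List V → List (Finset V)
  | [] => []
  | x :: xs =>
      xs.map (fun y => ({x, y} : Finset V)) ++
      (directPairs h (xs.filter (fun y => h y x)) ++
        directPairs h (xs.filter (fun y => !(h y x))))
  termination_by l => l.length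
  decreasing_by
    · simp only [List.length_cons, List.length_unattach]; exact Nat.lt_succ_of_le ((List.length_filter_le _ _).trans_eq List.length_attach)
    · simp only [List.length_cons, List.length_unattach]; exact Nat.lt_succ_of_le ((List.length_filter_le _ _).trans_eq List.length_attach)

/-- The unordered triples present together in a recursive call whose pivot is
one of them. -/
def pivotTriples (h : V → V → Bool) : List V → List (Finset V)
  | [] => []
  | x :: xs =>
      (xs.product xs).map (fun p => ({x, p.1, p.2} : Finset V)) ++
      (pivotTriples h (xs.filter (fun y => h y x)) ++
        pivotTriples h (xs.filter (fun y => !(h y x))))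
  termination_by l => l.length
  decreasing_by
    · simp only [List.length_cons, List.length_unattach]; exact Nat.lt_succ_of_le ((List.length_filter_le _ _).trans_eq List.length_attach)
    · simp only [List.length_cons, List.length_unattach]; exact Nat.lt_succ_of_le ((List.length_filter_le _ _).trans_eq List.length_attach)

/-- Expectation of `f` of the input list over a uniformly random ordering of
`V` (equivalently, over the random bits of QuickSort's pivot choices). -/
noncomputable def qsExp [Fintype V] (f : List V → ℝ) : ℝ :=
  (((Finset.univ : Finset V).toList.permutations.map f).sum) /
    (Nat.factorial (Fintype.card V))

/-- p_{uv}: the probability that the pair {u,v} is compared directly. -/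
noncomputable def pPair [Fintype V] (h : V → V → Bool) (u v : V) : ℝ :=
  qsExp (fun l => if ({u, v} : Finset V) ∈ directPairs h l then 1 else 0)

/-- p_{uvw}: the probability that u, v, w are in the same recursive call when
one of them is first chosen as pivot. -/
noncomputable def pTriple [Fintype V] (h : V → V → Bool) (u v w : V) : ℝ :=
  qsExp (fun l => if ({u, v, w} : Finset V) ∈ pivotTriples h l then 1 else 0)

/-- The {0,1}-valued preference function as a real number. -/
def hr (h : V → V → Bool) (a b : V) : ℝ := if h a b then 1 else 0

/-- Indicator that `u` is ranked before `v` in the output list. -/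
def rankBefore (l : List V) (u v : V) : ℝ := if l.idxOf u < l.idxOf v then 1 else 0

set_option linter.unusedSectionVars false

section ACNAux

variable (h : V → V → Bool)

/-- pivot-annotated triples -/
def pivotP (h : V → V → Bool) : List V → List (Finset V × V)
  | [] => []
  | x :: xs =>
      (xs.product xs).map (fun p => (({x, p.1, p.2} : Finset V), x)) ++
      (pivotP h (xs.filter (fun y => h y x)) ++
        pivotP h (xs.filter (fun y => !(h y x))))
  termination_by l => l.length
  decreasing_by
    · simp only [List.length_cons, List.length_unattach]; exact Nat.lt_succ_of_le ((List.length_filter_le _ _).trans_eq List.length_attach)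
    · simp only [List.length_cons, List.length_unattach]; exact Nat.lt_succ_of_le ((List.length_filter_le _ _).trans_eq List.length_attach)

def numDis (h : V → V → Bool) : List V → ℕ
  | [] => 0
  | a :: l => l.countP (fun b => h b a) + numDis h l

variable (h : V → V → Bool)

theorem qsort_perm (l : List V) : (qsort h l).Perm l := by
  induction l using qsort.induct h with
  | case1 => simp [qsort]
  | case2 x xs ih1 ih2 =>
    simp only [List.unattach_filter, List.unattach_attach] at ih1 ih2
    rw [qsort]
    exact ((ih1.append (ih2.cons x)).trans List.perm_middle).trans
      ((List.filter_append_perm _ xs).cons x)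

theorem numDis_append (A B : List V) :
    numDis h (A ++ B) = numDis h A + numDis h B +
      (A.map (fun a => B.countP (fun b => h b a))).sum := by
  induction A with
  | nil => simp [numDis]
  | cons a A ih => simp [numDis, ih, List.countP_append]; ring

theorem mem_pivotP_cons {t : Finset V} {w x : V} {xs : List V} :
    (t, w) ∈ pivotP h (x :: xs) ↔
      ((∃ c ∈ xs, ∃ d ∈ xs, t = {x, c, d}) ∧ w = x) ∨
      (t, w) ∈ pivotP h (xs.filter (fun y => h y x)) ∨
      (t, w) ∈ pivotP h (xs.filter (fun y => !(h y x))) := by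
  rw [pivotP]
  simp only [List.mem_append, List.mem_map, Prod.mk.injEq]
  constructor
  · rintro (⟨p, hp, h1, h2⟩ | hrest)
    · rw [List.pair_mem_product] at hp
      exact Or.inl ⟨⟨p.1, hp.1, p.2, hp.2, h1.symm⟩, h2.symm⟩
    · exact Or.inr hrest
  · rintro (⟨⟨c, hc, d, hd, ht⟩, hw⟩ | hrest)
    · exact Or.inl ⟨(c, d), List.pair_mem_product.2 ⟨hc, hd⟩, ht.symm, hw.symm⟩
    · exact Or.inr hrest

theorem mem_pivotTriples_cons {t : Finset V} {x : V} {xs : List V} :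
    t ∈ pivotTriples h (x :: xs) ↔
      (∃ c ∈ xs, ∃ d ∈ xs, t = {x, c, d}) ∨
      t ∈ pivotTriples h (xs.filter (fun y => h y x)) ∨
      t ∈ pivotTriples h (xs.filter (fun y => !(h y x))) := by
  rw [pivotTriples]
  simp only [List.mem_append, List.mem_map]
  constructor
  · rintro (⟨p, hp, h1⟩ | hrest)
    · rw [List.pair_mem_product] at hp
      exact Or.inl ⟨p.1, hp.1, p.2, hp.2, h1.symm⟩
    · exact Or.inr hrest
  · rintro (⟨c, hc, d, hd, ht⟩ | hrest)
    · exact Or.inl ⟨(c, d), List.pair_mem_product.2 ⟨hc, hd⟩, ht.symm⟩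
    · exact Or.inr hrest

theorem mem_pivotP_imp {t : Finset V} {w : V} : ∀ {l : List V},
    (t, w) ∈ pivotP h l → w ∈ t ∧ ∀ v ∈ t, v ∈ l := by
  intro l
  induction l using pivotP.induct h with
  | case1 => simp [pivotP]
  | case2 x xs ih1 ih2 =>
    simp only [List.unattach_filter, List.unattach_attach] at ih1 ih2
    rw [mem_pivotP_cons]
    rintro (⟨⟨c, hc, d, hd, ht⟩, hw⟩ | hm | hm)
    · subst ht hw
      refine ⟨Finset.mem_insert_self _ _, ?_⟩
      intro v hv
      rcases Finset.mem_insert.1 hv with rfl | hv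
      · exact List.mem_cons_self
      · rcases Finset.mem_insert.1 hv with rfl | hv
        · exact List.mem_cons_of_mem _ hc
        · rw [Finset.mem_singleton] at hv; subst hv
          exact List.mem_cons_of_mem _ hd
    · obtain ⟨h1, h2⟩ := ih1 hm
      exact ⟨h1, fun v hv => List.mem_cons_of_mem _ (List.mem_of_mem_filter (h2 v hv))⟩
    · obtain ⟨h1, h2⟩ := ih2 hm
      exact ⟨h1, fun v hv => List.mem_cons_of_mem _ (List.mem_of_mem_filter (h2 v hv))⟩

theorem mem_pivotTriples_iff {t : Finset V} : ∀ {l : List V},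
    t ∈ pivotTriples h l ↔ ∃ w, (t, w) ∈ pivotP h l := by
  intro l
  induction l using pivotP.induct h with
  | case1 => simp [pivotP, pivotTriples]
  | case2 x xs ih1 ih2 =>
    simp only [List.unattach_filter, List.unattach_attach] at ih1 ih2
    rw [mem_pivotTriples_cons]
    constructor
    · rintro (hnew | hm | hm)
      · exact ⟨x, mem_pivotP_cons h |>.2 (Or.inl ⟨hnew, rfl⟩)⟩
      · obtain ⟨w, hw⟩ := ih1.1 hm; exact ⟨w, mem_pivotP_cons h |>.2 (Or.inr (Or.inl hw))⟩
      · obtain ⟨w, hw⟩ := ih2.1 hm; exact ⟨w, mem_pivotP_cons h |>.2 (Or.inr (Or.inr hw))⟩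
    · rintro ⟨w, hw⟩
      rcases mem_pivotP_cons h |>.1 hw with ⟨hnew, _⟩ | hm | hm
      · exact Or.inl hnew
      · exact Or.inr (Or.inl (ih1.2 ⟨w, hm⟩))
      · exact Or.inr (Or.inr (ih2.2 ⟨w, hm⟩))

theorem mem_pivotTriples_imp {t : Finset V} {l : List V}
    (hm : t ∈ pivotTriples h l) : t.Nonempty ∧ ∀ v ∈ t, v ∈ l := by
  obtain ⟨w, hw⟩ := (mem_pivotTriples_iff h).1 hm
  obtain ⟨h1, h2⟩ := mem_pivotP_imp h hw
  exact ⟨⟨w, h1⟩, h2⟩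

theorem pivotP_unique {t : Finset V} {w w' : V} : ∀ {l : List V}, l.Nodup →
    (t, w) ∈ pivotP h l → (t, w') ∈ pivotP h l → w = w' := by
  intro l
  induction l using pivotP.induct h with
  | case1 => simp [pivotP]
  | case2 x xs ih1 ih2 =>
    simp only [List.unattach_filter, List.unattach_attach] at ih1 ih2
    intro hl hm1 hm2
    have hx : x ∉ xs := (List.nodup_cons.1 hl).1
    have hxs : xs.Nodup := (List.nodup_cons.1 hl).2
    have hsub : ∀ {w'' : V} {m : List V}, (t, w'') ∈ pivotP h m → ∀ v ∈ t, v ∈ m :=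
      fun hm => (mem_pivotP_imp h hm).2
    rcases (mem_pivotP_cons h).1 hm1 with ⟨⟨c, hc, d, hd, ht⟩, hw⟩ | hm1' | hm1' <;>
      rcases (mem_pivotP_cons h).1 hm2 with ⟨⟨c', hc', d', hd', ht'⟩, hw'⟩ | hm2' | hm2'
    · exact hw.trans hw'.symm
    · exfalso; subst ht
      exact hx (List.mem_of_mem_filter (hsub hm2' x (Finset.mem_insert_self _ _)))
    · exfalso; subst ht
      exact hx (List.mem_of_mem_filter (hsub hm2' x (Finset.mem_insert_self _ _)))
    · exfalso; subst ht'
      exact hx (List.mem_of_mem_filter (hsub hm1' x (Finset.mem_insert_self _ _)))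
    · exact ih1 (hxs.filter _) hm1' hm2'
    · exfalso
      have hwt := (mem_pivotP_imp h hm1').1
      have h1 := hsub hm1' w hwt
      have h2 := hsub hm2' w hwt
      rw [List.mem_filter] at h1 h2
      simp [h1.2] at h2
    · exfalso; subst ht'
      exact hx (List.mem_of_mem_filter (hsub hm1' x (Finset.mem_insert_self _ _)))
    · exfalso
      have hwt := (mem_pivotP_imp h hm1').1
      have h1 := hsub hm1' w hwt
      have h2 := hsub hm2' w hwt
      rw [List.mem_filter] at h1 h2
      simp [h2.2] at h1
    · exact ih2 (hxs.filter _) hm1' hm2'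

theorem triple₁ (a b c : V) : ({a, b, c} : Finset V) = {a, c, b} := by
  ext v; simp only [Finset.mem_insert, Finset.mem_singleton]; tauto
theorem triple₂ (a b c : V) : ({a, b, c} : Finset V) = {b, a, c} := by
  ext v; simp only [Finset.mem_insert, Finset.mem_singleton]; tauto
theorem triple₃ (a b c : V) : ({a, b, c} : Finset V) = {c, b, a} := by
  ext v; simp only [Finset.mem_insert, Finset.mem_singleton]; tauto

def Cyc (h : V → V → Bool) (t : Finset V) : Prop :=
  ∃ a b c : V, a ≠ b ∧ b ≠ c ∧ a ≠ c ∧ h a b = true ∧ h b c = true ∧ h c a = true ∧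
    t = {a, b, c}

instance [Fintype V] : DecidablePred (Cyc h) := fun t => by unfold Cyc; infer_instance

def TT [Fintype V] (h : V → V → Bool) : Finset (Finset V) := Finset.univ.filter (Cyc h)

theorem countP_toFinset {l : List V} (hl : l.Nodup) (p : V → Bool) :
    l.countP p = (l.toFinset.filter (fun b => p b = true)).card := by
  rw [List.countP_eq_length_filter, ← List.toFinset_card_of_nodup (hl.filter p),
    List.toFinset_filter]

theorem numDis_qsort [Fintype V] (htour : ∀ a b : V, a ≠ b → h a b = !h b a) :
    ∀ l : List V, l.Nodup →
      numDis h (qsort h l) = ((TT h).filter (fun t => t ∈ pivotTriples h l)).card := by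
  intro l
  induction l using qsort.induct h with
  | case1 =>
    intro _
    simp [qsort, pivotTriples, numDis]
  | case2 x xs ih1 ih2 =>
    simp only [List.unattach_filter, List.unattach_attach] at ih1 ih2
    intro hl
    have hx : x ∉ xs := (List.nodup_cons.1 hl).1
    have hxs : xs.Nodup := (List.nodup_cons.1 hl).2
    set L := xs.filter (fun y => h y x) with hLdef
    set R := xs.filter (fun y => !(h y x)) with hRdef
    have hLn : L.Nodup := hxs.filter _
    have hRn : R.Nodup := hxs.filter _
    have pL : (qsort h L).Perm L := qsort_perm h L
    have pR : (qsort h R).Perm R := qsort_perm h R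
    have memL : ∀ a, a ∈ L ↔ (a ∈ xs ∧ h a x = true) := by
      intro a; rw [hLdef, List.mem_filter]
    have memR : ∀ a, a ∈ R ↔ (a ∈ xs ∧ h a x = false) := by
      intro a; rw [hRdef, List.mem_filter]; simp
    -- LHS computation
    have lhs_eq : numDis h (qsort h (x :: xs)) =
        numDis h (qsort h L) + numDis h (qsort h R) +
          ∑ a ∈ L.toFinset, (R.toFinset.filter (fun b => h b a = true)).card := by
      rw [qsort, numDis_append]
      have e1 : numDis h (x :: qsort h R) = numDis h (qsort h R) := by
        have hz : (qsort h R).countP (fun b => h b x) = 0 := by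
          rw [pR.countP_eq, List.countP_eq_zero]
          intro b hb
          have := (memR b).1 hb
          simp [this.2]
        simp [numDis, hz]
      have e2 : ((qsort h L).map
            (fun a => (x :: qsort h R).countP (fun b => h b a))).sum =
          ∑ a ∈ L.toFinset, (R.toFinset.filter (fun b => h b a = true)).card := by
        have hcongr : ∀ a ∈ qsort h L,
            (x :: qsort h R).countP (fun b => h b a) = R.countP (fun b => h b a) := by
          intro a ha
          have haL := pL.mem_iff.1 ha
          have haxs := ((memL a).1 haL).1
          have hax : h a x = true := ((memL a).1 haL).2
          have hxa : h x a = false := by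
            rw [htour x a (fun e => hx (e ▸ haxs)), hax]; rfl
          rw [List.countP_cons, pR.countP_eq]
          simp [hxa]
        rw [List.map_congr_left hcongr]
        rw [(pL.map (fun a => R.countP (fun b => h b a))).sum_eq]
        rw [← List.sum_toFinset _ hLn]
        exact Finset.sum_congr rfl (fun a _ => countP_toFinset hRn _)
      rw [e1, e2]
    rw [lhs_eq, ih1 hLn, ih2 hRn]
    -- RHS computation
    have hsplit : (TT h).filter (fun t => t ∈ pivotTriples h (x :: xs)) =
        ((TT h).filter (fun t => ∃ c ∈ xs, ∃ d ∈ xs, t = {x, c, d}) ∪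
          (TT h).filter (fun t => t ∈ pivotTriples h L)) ∪
          (TT h).filter (fun t => t ∈ pivotTriples h R) := by
      ext t
      simp only [Finset.mem_union, Finset.mem_filter, mem_pivotTriples_cons]
      constructor
      · rintro ⟨hT, hnew | hm | hm⟩
        · exact Or.inl (Or.inl ⟨hT, hnew⟩)
        · exact Or.inl (Or.inr ⟨hT, hm⟩)
        · exact Or.inr ⟨hT, hm⟩
      · rintro ((⟨hT, hnew⟩ | ⟨hT, hm⟩) | ⟨hT, hm⟩)
        · exact ⟨hT, Or.inl hnew⟩
        · exact ⟨hT, Or.inr (Or.inl hm)⟩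
        · exact ⟨hT, Or.inr (Or.inr hm)⟩
    have hxmem : ∀ {t : Finset V}, (∃ c ∈ xs, ∃ d ∈ xs, t = {x, c, d}) → x ∈ t := by
      rintro t ⟨c, _, d, _, rfl⟩; exact Finset.mem_insert_self _ _
    have dLR : Disjoint ((TT h).filter (fun t => t ∈ pivotTriples h L))
        ((TT h).filter (fun t => t ∈ pivotTriples h R)) := by
      rw [Finset.disjoint_left]
      intro t h1 h2
      obtain ⟨⟨v, hv⟩, hall1⟩ := mem_pivotTriples_imp h (Finset.mem_filter.1 h1).2
      have hall2 := (mem_pivotTriples_imp h (Finset.mem_filter.1 h2).2).2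
      have hL' := ((memL v).1 (hall1 v hv)).2
      have hR' := ((memR v).1 (hall2 v hv)).2
      rw [hL'] at hR'; exact Bool.true_eq_false.mp hR'
    have dNL : Disjoint ((TT h).filter (fun t => ∃ c ∈ xs, ∃ d ∈ xs, t = {x, c, d}))
        ((TT h).filter (fun t => t ∈ pivotTriples h L)) := by
      rw [Finset.disjoint_left]
      intro t h1 h2
      have hxt := hxmem (Finset.mem_filter.1 h1).2
      have hall := (mem_pivotTriples_imp h (Finset.mem_filter.1 h2).2).2
      exact hx ((memL x).1 (hall x hxt)).1
    have dNR : Disjoint ((TT h).filter (fun t => ∃ c ∈ xs, ∃ d ∈ xs, t = {x, c, d}))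
        ((TT h).filter (fun t => t ∈ pivotTriples h R)) := by
      rw [Finset.disjoint_left]
      intro t h1 h2
      have hxt := hxmem (Finset.mem_filter.1 h1).2
      have hall := (mem_pivotTriples_imp h (Finset.mem_filter.1 h2).2).2
      exact hx ((memR x).1 (hall x hxt)).1
    rw [hsplit, Finset.card_union_of_disjoint (by
        rw [Finset.disjoint_union_left]; exact ⟨dNR, dLR⟩),
      Finset.card_union_of_disjoint dNL]
    -- the new-triples count
    have hnew : ((TT h).filter (fun t => ∃ c ∈ xs, ∃ d ∈ xs, t = {x, c, d})).card =
        ∑ a ∈ L.toFinset, (R.toFinset.filter (fun b => h b a = true)).card := by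
      have hbij : ((L.toFinset ×ˢ R.toFinset).filter (fun p => h p.2 p.1 = true)).card =
          ((TT h).filter (fun t => ∃ c ∈ xs, ∃ d ∈ xs, t = {x, c, d})).card := by
        apply Finset.card_bij (fun p _ => ({x, p.1, p.2} : Finset V))
        · rintro ⟨a, b⟩ hp
          rw [Finset.mem_filter, Finset.mem_product] at hp
          obtain ⟨⟨ha, hb⟩, hba⟩ := hp
          rw [List.mem_toFinset] at ha hb
          obtain ⟨haxs, hax⟩ := (memL a).1 ha
          obtain ⟨hbxs, hbx⟩ := (memR b).1 hb
          have hxa : x ≠ a := fun e => hx (e ▸ haxs)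
          have hxb : x ≠ b := fun e => hx (e ▸ hbxs)
          have hab : a ≠ b := fun e => by rw [e, hbx] at hax; exact Bool.false_ne_true hax
          refine Finset.mem_filter.2 ⟨Finset.mem_filter.2 ⟨Finset.mem_univ _, ?_⟩,
            ⟨a, haxs, b, hbxs, rfl⟩⟩
          refine ⟨x, b, a, hxb, (Ne.symm hab), hxa, ?_, hba, hax, triple₁ x a b⟩
          rw [htour x b hxb, hbx]; rfl
        · rintro ⟨a, b⟩ hp ⟨a', b'⟩ hp' heq
          rw [Finset.mem_filter, Finset.mem_product] at hp hp'
          obtain ⟨⟨ha, hb⟩, _⟩ := hp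
          obtain ⟨⟨ha', hb'⟩, _⟩ := hp'
          rw [List.mem_toFinset] at ha hb ha' hb'
          obtain ⟨haxs, hax⟩ := (memL a).1 ha
          obtain ⟨hbxs, hbx⟩ := (memR b).1 hb
          obtain ⟨haxs', hax'⟩ := (memL a').1 ha'
          obtain ⟨hbxs', hbx'⟩ := (memR b').1 hb'
          have hmema : a ∈ ({x, a', b'} : Finset V) := heq ▸ (by simp)
          have hmemb : b ∈ ({x, a', b'} : Finset V) := heq ▸ (by simp)
          simp only [Finset.mem_insert, Finset.mem_singleton] at hmema hmemb
          have ea : a = a' := by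
            rcases hmema with e | e | e
            · exact absurd (e ▸ haxs) hx
            · exact e
            · rw [e, hbx'] at hax; exact absurd hax (Bool.false_ne_true)
          have eb : b = b' := by
            rcases hmemb with e | e | e
            · exact absurd (e ▸ hbxs) hx
            · rw [e, hax'] at hbx; exact absurd hbx.symm (Bool.false_ne_true)
            · exact e
          simp [ea, eb]
        · intro t ht
          rw [Finset.mem_filter] at ht
          obtain ⟨htT, c', hc', d', hd', ht'⟩ := ht
          obtain ⟨a, b, c, hab, hbc, hac, h1, h2, h3, htabc⟩ := (Finset.mem_filter.1 htT).2
          have hxt : x ∈ t := ht' ▸ Finset.mem_insert_self _ _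
          have hmemxs : ∀ v ∈ t, v ≠ x → v ∈ xs := by
            intro v hv hvx
            rw [ht'] at hv
            simp only [Finset.mem_insert, Finset.mem_singleton] at hv
            rcases hv with e | e | e
            · exact absurd e hvx
            · exact e ▸ hc'
            · exact e ▸ hd'
          rw [htabc] at hxt
          simp only [Finset.mem_insert, Finset.mem_singleton] at hxt
          rcases hxt with rfl | rfl | rfl
          · -- x = a : use (c, b)
            refine ⟨(c, b), ?_, ?_⟩
            · rw [Finset.mem_filter, Finset.mem_product]
              refine ⟨⟨List.mem_toFinset.2 ((memL c).2 ⟨hmemxs c ((by rw [htabc]; simp)) (Ne.symm hac), h3⟩),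
                List.mem_toFinset.2 ((memR b).2 ⟨hmemxs b ((by rw [htabc]; simp)) (Ne.symm hab), ?_⟩)⟩, h2⟩
              rw [htour b x (Ne.symm hab), h1]; rfl
            · rw [triple₁, htabc]
          · -- x = b : use (a, c)
            refine ⟨(a, c), ?_, ?_⟩
            · rw [Finset.mem_filter, Finset.mem_product]
              refine ⟨⟨List.mem_toFinset.2 ((memL a).2 ⟨hmemxs a ((by rw [htabc]; simp)) hab, h1⟩),
                List.mem_toFinset.2 ((memR c).2 ⟨hmemxs c ((by rw [htabc]; simp)) (Ne.symm hbc), ?_⟩)⟩, h3⟩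
              rw [htour c x (Ne.symm hbc), h2]; rfl
            · rw [htabc, triple₂]
          · -- x = c : use (b, a)
            refine ⟨(b, a), ?_, ?_⟩
            · rw [Finset.mem_filter, Finset.mem_product]
              refine ⟨⟨List.mem_toFinset.2 ((memL b).2 ⟨hmemxs b ((by rw [htabc]; simp)) hbc, h2⟩),
                List.mem_toFinset.2 ((memR a).2 ⟨hmemxs a ((by rw [htabc]; simp)) hac, ?_⟩)⟩, h1⟩
              rw [htour a x hac, h3]; rfl
            · rw [htabc, triple₃]
      rw [← hbij, Finset.card_filter, Finset.sum_product]
      exact Finset.sum_congr rfl (fun a _ => (Finset.card_filter _ _).symm)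
    rw [hnew]
    omega
theorem swap_image_self {a b : V} {t : Finset V} (ha : a ∈ t) (hb : b ∈ t) :
    t.image (Equiv.swap a b) = t := by
  ext v
  rw [Finset.mem_image]
  constructor
  · rintro ⟨u, hu, rfl⟩
    rcases eq_or_ne u a with rfl | h1
    · rwa [Equiv.swap_apply_left]
    rcases eq_or_ne u b with rfl | h2
    · rwa [Equiv.swap_apply_right]
    · rwa [Equiv.swap_apply_of_ne_of_ne h1 h2]
  · intro hv
    refine ⟨Equiv.swap a b v, ?_, Equiv.swap_apply_self a b v⟩
    rcases eq_or_ne v a with rfl | h1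
    · rwa [Equiv.swap_apply_left]
    rcases eq_or_ne v b with rfl | h2
    · rwa [Equiv.swap_apply_right]
    · rwa [Equiv.swap_apply_of_ne_of_ne h1 h2]

theorem mem_map_swap {σ : Equiv.Perm V} {y : V} {xs : List V} :
    y ∈ xs.map σ ↔ σ.symm y ∈ xs := by
  rw [List.mem_map]
  constructor
  · rintro ⟨u, hu, rfl⟩; simpa using hu
  · intro hy; exact ⟨σ.symm y, hy, by simp⟩

theorem pivotP_swap {a b : V} (hab : a ≠ b) {t : Finset V} (hat : a ∈ t) (hbt : b ∈ t) :
    ∀ l : List V, l.Nodup →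
      ((t, a) ∈ pivotP h l ↔ (t, b) ∈ pivotP h (l.map (Equiv.swap a b))) := by
  set σ : Equiv.Perm V := Equiv.swap a b with hσ
  have hσa : σ a = b := Equiv.swap_apply_left a b
  have hσb : σ b = a := Equiv.swap_apply_right a b
  have himg : t.image σ = t := swap_image_self hat hbt
  intro l
  induction l using pivotP.induct h with
  | case1 => simp [pivotP]
  | case2 x xs ih1 ih2 =>
    simp only [List.unattach_filter, List.unattach_attach] at ih1 ih2
    intro hl
    have hx : x ∉ xs := (List.nodup_cons.1 hl).1
    have hxs : xs.Nodup := (List.nodup_cons.1 hl).2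
    rcases eq_or_ne x a with rfl | hxa
    · -- pivot is a
      rw [List.map_cons, hσa, mem_pivotP_cons, mem_pivotP_cons]
      have hrec1 : ∀ p : V → Bool, (t, x) ∉ pivotP h (xs.filter p) := by
        intro p hm
        exact hx (List.mem_of_mem_filter ((mem_pivotP_imp h hm).2 x hat))
      have hrec2 : ∀ p : V → Bool, (t, b) ∉ pivotP h ((xs.map σ).filter p) := by
        intro p hm
        have := List.mem_of_mem_filter ((mem_pivotP_imp h hm).2 b hbt)
        rw [mem_map_swap] at this
        rw [Equiv.symm_swap, hσb] at this
        exact hx this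
      constructor
      · rintro (⟨⟨c, hc, d, hd, ht⟩, _⟩ | hm | hm)
        · refine Or.inl ⟨⟨σ c, List.mem_map_of_mem hc, σ d, List.mem_map_of_mem hd, ?_⟩, rfl⟩
          rw [← himg, ht]
          simp [Finset.image_insert, hσa]
        · exact absurd hm (hrec1 _)
        · exact absurd hm (hrec1 _)
      · rintro (⟨⟨c, hc, d, hd, ht⟩, _⟩ | hm | hm)
        · rw [mem_map_swap, Equiv.symm_swap] at hc hd
          refine Or.inl ⟨⟨σ c, hc, σ d, hd, ?_⟩, rfl⟩
          rw [← himg, ht]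
          simp [Finset.image_insert, hσb, Equiv.swap_apply_self]
        · exact absurd hm (hrec2 _)
        · exact absurd hm (hrec2 _)
    · rcases eq_or_ne x b with rfl | hxb
      · -- pivot is b : both sides false
        rw [List.map_cons, hσb, mem_pivotP_cons, mem_pivotP_cons]
        constructor
        · rintro (⟨_, hax⟩ | hm | hm)
          · exact absurd hax hab
          · exact absurd (List.mem_of_mem_filter ((mem_pivotP_imp h hm).2 x hbt)) hx
          · exact absurd (List.mem_of_mem_filter ((mem_pivotP_imp h hm).2 x hbt)) hx
        · rintro (⟨_, hbx⟩ | hm | hm)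
          · exact absurd hbx.symm hab
          · exfalso
            have := List.mem_of_mem_filter ((mem_pivotP_imp h hm).2 a hat)
            rw [mem_map_swap, Equiv.symm_swap, hσa] at this
            exact hx this
          · exfalso
            have := List.mem_of_mem_filter ((mem_pivotP_imp h hm).2 a hat)
            rw [mem_map_swap, Equiv.symm_swap, hσa] at this
            exact hx this
      · -- pivot is neither a nor b
        have hσx : σ x = x := Equiv.swap_apply_of_ne_of_ne hxa hxb
        rw [List.map_cons, hσx]
        by_cases hcmp : h a x = h b x
        · have hcomp : ∀ y : V, h (σ y) x = h y x := by
            intro y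
            rcases eq_or_ne y a with rfl | h1
            · rw [hσa, hcmp]
            rcases eq_or_ne y b with rfl | h2
            · rw [hσb, hcmp]
            · rw [Equiv.swap_apply_of_ne_of_ne h1 h2]
          have hfL : (xs.map σ).filter (fun y => h y x) =
              (xs.filter (fun y => h y x)).map σ := by
            rw [List.filter_map]
            congr 1
            apply List.filter_congr
            intro y _
            simp [hcomp y]
          have hfR : (xs.map σ).filter (fun y => !(h y x)) =
              (xs.filter (fun y => !(h y x))).map σ := by
            rw [List.filter_map]
            congr 1
            apply List.filter_congr
            intro y _
            simp [hcomp y]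
          rw [mem_pivotP_cons, mem_pivotP_cons, hfL, hfR]
          constructor
          · rintro (⟨_, hax⟩ | hm | hm)
            · exact absurd hax (Ne.symm hxa)
            · exact Or.inr (Or.inl ((ih1 (hxs.filter _)).1 hm))
            · exact Or.inr (Or.inr ((ih2 (hxs.filter _)).1 hm))
          · rintro (⟨_, hbx⟩ | hm | hm)
            · exact absurd hbx (Ne.symm hxb)
            · exact Or.inr (Or.inl ((ih1 (hxs.filter _)).2 hm))
            · exact Or.inr (Or.inr ((ih2 (hxs.filter _)).2 hm))
        · -- pivot separates a and b : both sides false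
          have hmemab : ∀ {w'' : V} {m : List V}, (t, w'') ∈ pivotP h m →
              a ∈ m ∧ b ∈ m := by
            intro w'' m hm
            exact ⟨(mem_pivotP_imp h hm).2 a hat, (mem_pivotP_imp h hm).2 b hbt⟩
          constructor
          · intro hm
            exfalso
            rcases (mem_pivotP_cons h).1 hm with ⟨_, hax⟩ | hm' | hm'
            · exact hxa.symm hax
            · obtain ⟨ha', hb'⟩ := hmemab hm'
              exact hcmp (((List.mem_filter.1 ha').2).trans ((List.mem_filter.1 hb').2).symm)
            · obtain ⟨ha', hb'⟩ := hmemab hm'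
              have e1 := (List.mem_filter.1 ha').2
              have e2 := (List.mem_filter.1 hb').2
              simp only [Bool.not_eq_true'] at e1 e2
              exact hcmp (e1.trans e2.symm)
          · intro hm
            exfalso
            rcases (mem_pivotP_cons h).1 hm with ⟨_, hbx⟩ | hm' | hm'
            · exact hxb.symm hbx
            · obtain ⟨ha', hb'⟩ := hmemab hm'
              exact hcmp (((List.mem_filter.1 ha').2).trans ((List.mem_filter.1 hb').2).symm)
            · obtain ⟨ha', hb'⟩ := hmemab hm'
              have e1 := (List.mem_filter.1 ha').2
              have e2 := (List.mem_filter.1 hb').2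
              simp only [Bool.not_eq_true'] at e1 e2
              exact hcmp (e1.trans e2.symm)
theorem sep_unique {p q w w' : V} (hqw : h q w = true) (hpw : h p w = false)
    (hqw' : h q w' = true) (hpw' : h p w' = false) :
    ∀ l : List V, l.Nodup → (({p, q, w} : Finset V), w) ∈ pivotP h l →
      (({p, q, w'} : Finset V), w') ∈ pivotP h l → w = w' := by
  intro l
  induction l using pivotP.induct h with
  | case1 => simp [pivotP]
  | case2 x xs ih1 ih2 =>
    simp only [List.unattach_filter, List.unattach_attach] at ih1 ih2
    intro hl hm1 hm2
    have hxs : xs.Nodup := (List.nodup_cons.1 hl).2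
    have hpmem : ∀ {u : V}, p ∈ ({p, q, u} : Finset V) := by intro u; simp
    have hqmem : ∀ {u : V}, q ∈ ({p, q, u} : Finset V) := by intro u; simp
    rcases (mem_pivotP_cons h).1 hm1 with ⟨_, hw⟩ | hm1' | hm1' <;>
      rcases (mem_pivotP_cons h).1 hm2 with ⟨_, hw'⟩ | hm2' | hm2'
    · exact hw.trans hw'.symm
    · exfalso
      have := (List.mem_filter.1 ((mem_pivotP_imp h hm2').2 p hpmem)).2
      rw [← hw] at this
      rw [this] at hpw; exact Bool.true_eq_false.mp hpw
    · exfalso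
      have := (List.mem_filter.1 ((mem_pivotP_imp h hm2').2 q hqmem)).2
      simp only [Bool.not_eq_true'] at this
      rw [← hw] at this
      rw [this] at hqw; exact Bool.false_ne_true hqw
    · exfalso
      have := (List.mem_filter.1 ((mem_pivotP_imp h hm1').2 p hpmem)).2
      rw [← hw'] at this
      rw [this] at hpw'; exact Bool.true_eq_false.mp hpw'
    · exact ih1 (hxs.filter _) hm1' hm2'
    · exfalso
      have h1 := (List.mem_filter.1 ((mem_pivotP_imp h hm1').2 p hpmem)).2
      have h2 := (List.mem_filter.1 ((mem_pivotP_imp h hm2').2 p hpmem)).2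
      simp only [Bool.not_eq_true'] at h2
      rw [h1] at h2; exact Bool.true_eq_false.mp h2
    · exfalso
      have := (List.mem_filter.1 ((mem_pivotP_imp h hm1').2 q hqmem)).2
      simp only [Bool.not_eq_true'] at this
      rw [hw'] at hqw'
      rw [this] at hqw'; exact Bool.false_ne_true hqw'
    · exfalso
      have h1 := (List.mem_filter.1 ((mem_pivotP_imp h hm1').2 p hpmem)).2
      have h2 := (List.mem_filter.1 ((mem_pivotP_imp h hm2').2 p hpmem)).2
      simp only [Bool.not_eq_true'] at h1
      rw [h2] at h1; exact Bool.true_eq_false.mp h1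
    · exact ih2 (hxs.filter _) hm1' hm2'

/-- The set of ordered pairs on which `m` disagrees with `h`. -/
def disSet [Fintype V] (h : V → V → Bool) (m : List V) : Finset (V × V) :=
  Finset.univ.filter (fun p : V × V =>
    p.1 ∈ m ∧ h p.1 p.2 = true ∧ m.idxOf p.2 < m.idxOf p.1)

theorem numDis_eq_card [Fintype V] :
    ∀ m : List V, m.Nodup → numDis h m = (disSet h m).card := by
  intro m
  induction m with
  | nil => simp [numDis, disSet]
  | cons x m' ih =>
    intro hm
    have hx : x ∉ m' := (List.nodup_cons.1 hm).1
    have hm' : m'.Nodup := (List.nodup_cons.1 hm).2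
    have key := Finset.card_filter_add_card_filter_not
      (s := disSet h (x :: m')) (p := fun p : V × V => p.2 = x)
    have hA : (disSet h (x :: m')).filter (fun p : V × V => p.2 = x) =
        (m'.toFinset.filter (fun a => h a x = true)).image (fun a => (a, x)) := by
      ext ⟨p1, p2⟩
      simp only [disSet, Finset.mem_filter, Finset.mem_univ, true_and, Finset.mem_image,
        List.mem_toFinset]
      constructor
      · rintro ⟨⟨hp1, hh, hlt⟩, he⟩
        rw [he, List.idxOf_cons_self] at hlt
        have hp1x : p1 ≠ x := by
          rintro rfl
          rw [List.idxOf_cons_self] at hlt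
          exact Nat.lt_irrefl _ hlt
        have hp1' : p1 ∈ m' := (List.mem_cons.1 hp1).resolve_left hp1x
        exact ⟨p1, ⟨hp1', he ▸ hh⟩, by rw [he]⟩
      · rintro ⟨a, ⟨ha, hh⟩, he⟩
        injection he with e1 e2
        subst e1; subst e2
        have hax : a ≠ x := fun e => hx (e ▸ ha)
        refine ⟨⟨List.mem_cons_of_mem _ ha, hh, ?_⟩, rfl⟩
        rw [List.idxOf_cons_self, List.idxOf_cons_ne _ (Ne.symm hax)]
        exact Nat.succ_pos _
    have hB : (disSet h (x :: m')).filter (fun p : V × V => ¬p.2 = x) = disSet h m' := by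
      ext ⟨p1, p2⟩
      simp only [disSet, Finset.mem_filter, Finset.mem_univ, true_and]
      constructor
      · rintro ⟨⟨hp1, hh, hlt⟩, hne⟩
        have hp1x : p1 ≠ x := by
          rintro rfl
          rw [List.idxOf_cons_self] at hlt
          exact Nat.not_lt_zero _ hlt
        rcases List.mem_cons.1 hp1 with rfl | hp1'
        · exact absurd rfl hp1x
        · refine ⟨hp1', hh, ?_⟩
          rw [List.idxOf_cons_ne _ (Ne.symm hp1x), List.idxOf_cons_ne _ (Ne.symm hne)] at hlt
          omega
      · rintro ⟨hp1, hh, hlt⟩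
        have hp1x : p1 ≠ x := fun e => hx (e ▸ hp1)
        have hp2x : p2 ≠ x := by
          rintro rfl
          have h1 : m'.idxOf p1 < m'.length := List.idxOf_lt_length_iff.2 hp1
          have h2 : m'.idxOf p2 = m'.length := List.idxOf_eq_length hx
          omega
        refine ⟨⟨List.mem_cons_of_mem _ hp1, hh, ?_⟩, hp2x⟩
        rw [List.idxOf_cons_ne _ (Ne.symm hp1x), List.idxOf_cons_ne _ (Ne.symm hp2x)]
        omega
    have hAcard : ((disSet h (x :: m')).filter (fun p : V × V => p.2 = x)).card =
        m'.countP (fun b => h b x) := by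
      rw [hA, Finset.card_image_of_injective _ (fun a a' e => by simpa using congrArg Prod.fst e)]
      exact (countP_toFinset hm' _).symm
    have : numDis h (x :: m') = m'.countP (fun b => h b x) + numDis h m' := rfl
    rw [this, ih hm', ← key, hAcard, hB]
theorem triple_rot (a b c : V) : ({a, b, c} : Finset V) = {b, c, a} := by
  ext v; simp only [Finset.mem_insert, Finset.mem_singleton]; tauto

/-- The finset of permutations of `univ.toList`. -/
noncomputable def PF (V : Type*) [DecidableEq V] [Fintype V] : Finset (List V) :=
  ((Finset.univ : Finset V).toList.permutations).toFinset

theorem mem_PF [Fintype V] {m : List V} :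
    m ∈ PF V ↔ m.Perm (Finset.univ : Finset V).toList := by
  rw [PF, List.mem_toFinset, List.mem_permutations]

theorem mem_PF_nodup [Fintype V] {m : List V} (hm : m ∈ PF V) : m.Nodup :=
  (mem_PF.1 hm).nodup_iff.2 (Finset.nodup_toList _)

theorem map_mem_PF [Fintype V] (σ : Equiv.Perm V) {m : List V} (hm : m ∈ PF V) :
    m.map σ ∈ PF V := by
  rw [mem_PF]
  refine ((mem_PF.1 hm).map σ).trans ?_
  apply List.perm_of_nodup_nodup_toFinset_eq
  · exact (Finset.nodup_toList _).map σ.injective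
  · exact Finset.nodup_toList _
  · ext v
    simp only [List.mem_toFinset, List.mem_map, Finset.mem_toList]
    exact ⟨fun _ => Finset.mem_univ v, fun _ => ⟨σ.symm v, Finset.mem_univ _, by simp⟩⟩

theorem sum_swap_indicator [Fintype V] {t : Finset V} {a b : V} (hat : a ∈ t) (hbt : b ∈ t) :
    ∑ m ∈ PF V, (if (t, a) ∈ pivotP h m then 1 else 0 : ℕ) =
      ∑ m ∈ PF V, (if (t, b) ∈ pivotP h m then 1 else 0 : ℕ) := by
  rcases eq_or_ne a b with rfl | hab
  · rfl
  have hinv : ∀ m : List V, (m.map (Equiv.swap a b)).map (Equiv.swap a b) = m := by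
    intro m
    rw [List.map_map]
    have : (Equiv.swap a b) ∘ (Equiv.swap a b) = id := funext (Equiv.swap_apply_self a b)
    rw [this, List.map_id]
  refine Finset.sum_nbij' (fun m => m.map (Equiv.swap a b)) (fun m => m.map (Equiv.swap a b))
    (fun m hm => map_mem_PF _ hm) (fun m hm => map_mem_PF _ hm)
    (fun m _ => hinv m) (fun m _ => hinv m) ?_
  intro m hm
  have := pivotP_swap h hab hat hbt m (mem_PF_nodup hm)
  simp only [this]

theorem hit_split [Fintype V] {t : Finset V} {p q w : V} (ht : t = {p, q, w})
    (hpq : p ≠ q) (hqw : q ≠ w) (hpw : p ≠ w) {m : List V} (hm : m.Nodup) :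
    (if t ∈ pivotTriples h m then 1 else 0 : ℕ) =
      (if (t, p) ∈ pivotP h m then 1 else 0) + (if (t, q) ∈ pivotP h m then 1 else 0) +
        (if (t, w) ∈ pivotP h m then 1 else 0) := by
  by_cases hmem : t ∈ pivotTriples h m
  · obtain ⟨w0, hw0⟩ := (mem_pivotTriples_iff h).1 hmem
    have hw0t : w0 ∈ t := (mem_pivotP_imp h hw0).1
    rw [ht] at hw0t
    simp only [Finset.mem_insert, Finset.mem_singleton] at hw0t
    have huniq : ∀ {u : V}, (t, u) ∈ pivotP h m → u = w0 :=
      fun hu => pivotP_unique h hm hu hw0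
    rcases hw0t with rfl | rfl | rfl
    · rw [if_pos hmem, if_pos hw0, if_neg (fun hc => hpq ((huniq hc).symm)),
        if_neg (fun hc => hpw ((huniq hc).symm))]
    · rw [if_pos hmem, if_pos hw0, if_neg (fun hc => hpq (huniq hc)),
        if_neg (fun hc => hqw ((huniq hc).symm))]
    · rw [if_pos hmem, if_pos hw0, if_neg (fun hc => hpw (huniq hc)),
        if_neg (fun hc => hqw (huniq hc))]
  · have hnone : ∀ u : V, (t, u) ∉ pivotP h m := by
      intro u hu
      exact hmem ((mem_pivotTriples_iff h).2 ⟨u, hu⟩)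
    rw [if_neg hmem, if_neg (hnone p), if_neg (hnone q), if_neg (hnone w)]
/-- ordered pairs disagreeing with the ranking σo -/
def dSig [Fintype V] {n : ℕ} (h : V → V → Bool) (σo : V ≃ Fin n) : Finset (V × V) :=
  Finset.univ.filter (fun p : V × V =>
    p.1 ≠ p.2 ∧ h p.1 p.2 = true ∧ (σo p.2 : ℕ) < (σo p.1 : ℕ))

theorem exists_pqw {n : ℕ} (σo : V ≃ Fin n) {t : Finset V} (hc : Cyc h t) :
    ∃ x : V × V × V, (x.1 ≠ x.2.1 ∧ x.2.1 ≠ x.2.2 ∧ x.1 ≠ x.2.2) ∧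
      h x.1 x.2.1 = true ∧ h x.2.1 x.2.2 = true ∧ h x.2.2 x.1 = true ∧
      t = {x.1, x.2.1, x.2.2} ∧ (σo x.2.1 : ℕ) < (σo x.1 : ℕ) := by
  obtain ⟨a, b, c, hab, hbc, hac, h1, h2, h3, ht⟩ := hc
  by_cases s1 : (σo b : ℕ) < (σo a : ℕ)
  · exact ⟨(a, b, c), ⟨hab, hbc, hac⟩, h1, h2, h3, ht, s1⟩
  by_cases s2 : (σo c : ℕ) < (σo b : ℕ)
  · exact ⟨(b, c, a), ⟨hbc, Ne.symm hac, Ne.symm hab⟩, h2, h3, h1,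
      by rw [ht]; exact triple_rot a b c, s2⟩
  by_cases s3 : (σo a : ℕ) < (σo c : ℕ)
  · exact ⟨(c, a, b), ⟨Ne.symm hac, hab, Ne.symm hbc⟩, h3, h1, h2,
      by rw [ht, triple_rot a b c, triple_rot b c a], s3⟩
  · exfalso
    have n1 : (σo a : ℕ) ≠ (σo b : ℕ) := fun e => hab (σo.injective (Fin.ext e))
    have n2 : (σo b : ℕ) ≠ (σo c : ℕ) := fun e => hbc (σo.injective (Fin.ext e))
    have n3 : (σo a : ℕ) ≠ (σo c : ℕ) := fun e => hac (σo.injective (Fin.ext e))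
    omega

theorem main_count [Fintype V] {n : ℕ} (htour : ∀ a b : V, a ≠ b → h a b = !h b a)
    (σo : V ≃ Fin n) :
    ∑ m ∈ PF V, numDis h (qsort h m) ≤ 3 * ((PF V).card * (dSig h σo).card) := by
  have step1 : ∑ m ∈ PF V, numDis h (qsort h m)
      = ∑ t ∈ TT h, ∑ m ∈ PF V, (if t ∈ pivotTriples h m then 1 else 0 : ℕ) := by
    have hcong : ∀ m ∈ PF V, numDis h (qsort h m) =
        ∑ t ∈ TT h, (if t ∈ pivotTriples h m then 1 else 0 : ℕ) := by
      intro m hm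
      rw [numDis_qsort h htour m (mem_PF_nodup hm), Finset.card_filter]
    rw [Finset.sum_congr rfl hcong, Finset.sum_comm]
  rw [step1, ← Finset.sum_attach (TT h)
    (fun t => ∑ m ∈ PF V, (if t ∈ pivotTriples h m then 1 else 0 : ℕ))]
  have key : ∀ t : {x // x ∈ TT h}, ∃ x : V × V × V,
      (x.1 ≠ x.2.1 ∧ x.2.1 ≠ x.2.2 ∧ x.1 ≠ x.2.2) ∧
      h x.1 x.2.1 = true ∧ h x.2.1 x.2.2 = true ∧ h x.2.2 x.1 = true ∧
      (t : Finset V) = {x.1, x.2.1, x.2.2} ∧ (σo x.2.1 : ℕ) < (σo x.1 : ℕ) :=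
    fun t => exists_pqw h σo ((Finset.mem_filter.1 t.2).2)
  choose F hd hPQ hQW hWP hteq hlt using key
  have hPmem : ∀ t : {x // x ∈ TT h}, (F t).1 ∈ (t : Finset V) := by
    intro t; rw [hteq t]; simp
  have hQmem : ∀ t : {x // x ∈ TT h}, (F t).2.1 ∈ (t : Finset V) := by
    intro t; rw [hteq t]; simp
  have hWmem : ∀ t : {x // x ∈ TT h}, (F t).2.2 ∈ (t : Finset V) := by
    intro t; rw [hteq t]; simp
  have hPW : ∀ t : {x // x ∈ TT h}, h (F t).1 (F t).2.2 = false := by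
    intro t
    rw [htour (F t).1 (F t).2.2 (hd t).2.2, hWP t]; rfl
  have per_t : ∀ t : {x // x ∈ TT h},
      ∑ m ∈ PF V, (if (t : Finset V) ∈ pivotTriples h m then 1 else 0 : ℕ) =
        3 * ∑ m ∈ PF V, (if ((t : Finset V), (F t).2.2) ∈ pivotP h m then 1 else 0 : ℕ) := by
    intro t
    have e1 : ∑ m ∈ PF V, (if (t : Finset V) ∈ pivotTriples h m then 1 else 0 : ℕ) =
        ∑ m ∈ PF V, ((if ((t : Finset V), (F t).1) ∈ pivotP h m then 1 else 0 : ℕ) +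
          (if ((t : Finset V), (F t).2.1) ∈ pivotP h m then 1 else 0) +
          (if ((t : Finset V), (F t).2.2) ∈ pivotP h m then 1 else 0)) :=
      Finset.sum_congr rfl (fun m hm =>
        hit_split h (hteq t) (hd t).1 (hd t).2.1 (hd t).2.2 (mem_PF_nodup hm))
    rw [e1]
    rw [Finset.sum_add_distrib, Finset.sum_add_distrib]
    rw [sum_swap_indicator h (hPmem t) (hWmem t), sum_swap_indicator h (hQmem t) (hWmem t)]
    ring
  rw [Finset.sum_congr rfl (fun t _ => per_t t), ← Finset.mul_sum, Finset.sum_comm]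
  have bound_m : ∀ m ∈ PF V,
      ∑ t ∈ (TT h).attach, (if ((t : Finset V), (F t).2.2) ∈ pivotP h m then 1 else 0 : ℕ) ≤
        (dSig h σo).card := by
    intro m hm
    have e2 : ∑ t ∈ (TT h).attach,
        (if ((t : Finset V), (F t).2.2) ∈ pivotP h m then 1 else 0 : ℕ) =
        ((TT h).attach.filter
          (fun t : {x // x ∈ TT h} => ((t : Finset V), (F t).2.2) ∈ pivotP h m)).card :=
      (Finset.card_filter _ _).symm
    rw [e2]
    apply Finset.card_le_card_of_injOn (fun t : {x // x ∈ TT h} => ((F t).1, (F t).2.1))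
    · intro t htf
      rw [Finset.mem_coe, Finset.mem_filter] at htf
      exact Finset.mem_filter.2 ⟨Finset.mem_univ _, (hd t).1, hPQ t, hlt t⟩
    · intro t htf t' htf' heq
      rw [Finset.mem_coe, Finset.mem_filter] at htf htf'
      have e1 : (F t).1 = (F t').1 := by
        have := congrArg Prod.fst heq
        simpa using this
      have e2 : (F t).2.1 = (F t').2.1 := by
        have := congrArg Prod.snd heq
        simpa using this
      have hmem1 : (({(F t).1, (F t).2.1, (F t).2.2} : Finset V), (F t).2.2) ∈ pivotP h m := by
        rw [← hteq t]; exact htf.2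
      have hmem2 : (({(F t).1, (F t).2.1, (F t').2.2} : Finset V), (F t').2.2) ∈ pivotP h m := by
        rw [e1, e2, ← hteq t']; exact htf'.2
      have hww : (F t).2.2 = (F t').2.2 := by
        refine sep_unique h (hQW t) (hPW t) ?_ ?_ m (mem_PF_nodup hm) hmem1 hmem2
        · rw [e2]; exact hQW t'
        · rw [e1]; exact hPW t'
      apply Subtype.ext
      rw [hteq t, hteq t', e1, e2, hww]
  calc 3 * ∑ m ∈ PF V, ∑ t ∈ (TT h).attach,
        (if ((t : Finset V), (F t).2.2) ∈ pivotP h m then 1 else 0 : ℕ)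
      ≤ 3 * ∑ m ∈ PF V, (dSig h σo).card :=
        Nat.mul_le_mul_left 3 (Finset.sum_le_sum bound_m)
    _ = 3 * ((PF V).card * (dSig h σo).card) := by
        rw [Finset.sum_const, smul_eq_mul]
theorem sum_hr_rank [Fintype V] (m : List V) (hm : m.Nodup) (hfull : ∀ v : V, v ∈ m) :
    ∑ p ∈ (Finset.univ : Finset (V × V)).filter (fun p => p.1 ≠ p.2),
      hr h p.1 p.2 * rankBefore m p.2 p.1 = (numDis h m : ℝ) := by
  have hcong : ∀ p ∈ (Finset.univ : Finset (V × V)).filter (fun p => p.1 ≠ p.2),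
      hr h p.1 p.2 * rankBefore m p.2 p.1 =
        if (h p.1 p.2 = true ∧ m.idxOf p.2 < m.idxOf p.1) then (1 : ℝ) else 0 := by
    intro p _
    by_cases h1 : h p.1 p.2 = true <;> by_cases h2 : m.idxOf p.2 < m.idxOf p.1 <;>
      simp [hr, rankBefore, h1, h2]
  rw [Finset.sum_congr rfl hcong, Finset.sum_boole]
  have hset : ((Finset.univ : Finset (V × V)).filter (fun p => p.1 ≠ p.2)).filter
      (fun p => h p.1 p.2 = true ∧ m.idxOf p.2 < m.idxOf p.1) = disSet h m := by
    ext p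
    simp only [Finset.mem_filter, Finset.mem_univ, true_and, disSet]
    constructor
    · rintro ⟨_, hh, hlt⟩
      exact ⟨hfull p.1, hh, hlt⟩
    · rintro ⟨_, hh, hlt⟩
      refine ⟨fun e => ?_, hh, hlt⟩
      rw [e] at hlt
      exact Nat.lt_irrefl _ hlt
  rw [hset, numDis_eq_card h m hm]

theorem sum_hr_sigma [Fintype V] {n : ℕ} (σo : V ≃ Fin n) :
    ∑ p ∈ (Finset.univ : Finset (V × V)).filter (fun p => p.1 ≠ p.2),
      hr h p.1 p.2 * (if (σo p.2 : ℕ) < (σo p.1 : ℕ) then (1 : ℝ) else 0) =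
      ((dSig h σo).card : ℝ) := by
  have hcong : ∀ p ∈ (Finset.univ : Finset (V × V)).filter (fun p => p.1 ≠ p.2),
      hr h p.1 p.2 * (if (σo p.2 : ℕ) < (σo p.1 : ℕ) then (1 : ℝ) else 0) =
        if (h p.1 p.2 = true ∧ (σo p.2 : ℕ) < (σo p.1 : ℕ)) then (1 : ℝ) else 0 := by
    intro p _
    by_cases h1 : h p.1 p.2 = true <;> by_cases h2 : (σo p.2 : ℕ) < (σo p.1 : ℕ) <;>
      simp [hr, h1, h2]
  rw [Finset.sum_congr rfl hcong, Finset.sum_boole]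
  have hset : ((Finset.univ : Finset (V × V)).filter (fun p => p.1 ≠ p.2)).filter
      (fun p => h p.1 p.2 = true ∧ (σo p.2 : ℕ) < (σo p.1 : ℕ)) = dSig h σo := by
    ext p
    simp only [Finset.mem_filter, Finset.mem_univ, true_and, dSig]
    try tauto
  rw [hset]

end ACNAux

/-- the expected pairwise disagreement of QuickSort's output with
the preference function h is at most three times the minimal disagreement of
any ranking with h. -/
theorem quicksort_disagreement_bound [Fintype V] {n : ℕ}
    (hn : Fintype.card V = n)
    (h : V → V → Bool) (htour : ∀ a b : V, a ≠ b → h a b = !h b a)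
    (σopt : V ≃ Fin n)
    (hopt : ∀ σ : V ≃ Fin n,
      ((n.choose 2 : ℝ))⁻¹ *
          ∑ p ∈ (Finset.univ : Finset (V × V)).filter (fun p => p.1 ≠ p.2),
            hr h p.1 p.2 * (if (σopt p.2 : ℕ) < (σopt p.1 : ℕ) then (1 : ℝ) else 0)
        ≤ ((n.choose 2 : ℝ))⁻¹ *
          ∑ p ∈ (Finset.univ : Finset (V × V)).filter (fun p => p.1 ≠ p.2),
            hr h p.1 p.2 * (if (σ p.2 : ℕ) < (σ p.1 : ℕ) then (1 : ℝ) else 0)) :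
    qsExp (fun l =>
        ((n.choose 2 : ℝ))⁻¹ *
          ∑ p ∈ (Finset.univ : Finset (V × V)).filter (fun p => p.1 ≠ p.2),
            hr h p.1 p.2 * rankBefore (qsort h l) p.2 p.1)
      ≤ 3 * (((n.choose 2 : ℝ))⁻¹ *
          ∑ p ∈ (Finset.univ : Finset (V × V)).filter (fun p => p.1 ≠ p.2),
            hr h p.1 p.2 * (if (σopt p.2 : ℕ) < (σopt p.1 : ℕ) then (1 : ℝ) else 0)) := by
  have hnp : ((Finset.univ : Finset V).toList.permutations).Nodup :=
    List.nodup_permutations _ (Finset.nodup_toList _)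
  rw [qsExp, ← List.sum_toFinset _ hnp]
  rw [sum_hr_sigma h σopt]
  have hPF : ((Finset.univ : Finset V).toList.permutations).toFinset = PF V := rfl
  rw [hPF]
  have hcong : ∀ m ∈ PF V,
      ((n.choose 2 : ℝ))⁻¹ *
          ∑ p ∈ (Finset.univ : Finset (V × V)).filter (fun p => p.1 ≠ p.2),
            hr h p.1 p.2 * rankBefore (qsort h m) p.2 p.1
        = ((n.choose 2 : ℝ))⁻¹ * (numDis h (qsort h m) : ℝ) := by
    intro m hm
    congr 1
    apply sum_hr_rank
    · exact (qsort_perm h m).nodup_iff.2 (mem_PF_nodup hm)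
    · intro v
      exact ((qsort_perm h m).trans (mem_PF.1 hm)).mem_iff.2
        (Finset.mem_toList.2 (Finset.mem_univ v))
  rw [Finset.sum_congr rfl hcong, ← Finset.mul_sum]
  -- cardinality of PF
  have hPFcard : (PF V).card = Nat.factorial n := by
    rw [PF, List.toFinset_card_of_nodup hnp, List.length_permutations,
      Finset.length_toList, Finset.card_univ, hn]
  have hX : ∑ m ∈ PF V, (numDis h (qsort h m) : ℝ) ≤
      3 * ((Nat.factorial n : ℝ) * ((dSig h σopt).card : ℝ)) := by
    rw [← Nat.cast_sum]
    calc ((∑ m ∈ PF V, numDis h (qsort h m) : ℕ) : ℝ)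
        ≤ ((3 * ((PF V).card * (dSig h σopt).card) : ℕ) : ℝ) :=
          Nat.cast_le.2 (main_count h htour σopt)
      _ = 3 * ((Nat.factorial n : ℝ) * ((dSig h σopt).card : ℝ)) := by
          rw [hPFcard]; push_cast; ring
  have hC : (0 : ℝ) ≤ ((n.choose 2 : ℝ))⁻¹ := inv_nonneg.2 (Nat.cast_nonneg _)
  have hfpos : (0 : ℝ) < (Nat.factorial (Fintype.card V) : ℝ) := by
    exact_mod_cast Nat.factorial_pos _
  have hfne : (Nat.factorial (Fintype.card V) : ℝ) ≠ 0 := ne_of_gt hfpos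
  have hnum : ((n.choose 2 : ℝ))⁻¹ * ∑ m ∈ PF V, (numDis h (qsort h m) : ℝ) ≤
      ((n.choose 2 : ℝ))⁻¹ * (3 * ((Nat.factorial n : ℝ) * ((dSig h σopt).card : ℝ))) :=
    mul_le_mul_of_nonneg_left hX hC
  calc ((n.choose 2 : ℝ))⁻¹ * (∑ m ∈ PF V, (numDis h (qsort h m) : ℝ)) /
        (Nat.factorial (Fintype.card V) : ℝ)
      ≤ ((n.choose 2 : ℝ))⁻¹ * (3 * ((Nat.factorial n : ℝ) * ((dSig h σopt).card : ℝ))) /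
        (Nat.factorial (Fintype.card V) : ℝ) := by
        exact (div_le_div_iff_of_pos_right hfpos).2 hnum
    _ = 3 * (((n.choose 2 : ℝ))⁻¹ * ((dSig h σopt).card : ℝ)) := by
        rw [hn, div_eq_iff (by rw [← hn]; exact hfne)]
        ring
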